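/- Let d ≥ 1, let V be a positive-definite 2d×2d real matrix with d×d blocks V = [[Σ₁, Ω], [Ωᵀ, Σ₂]], let H be a symmetric positive-semidefinite d×d real matrix, and let ω ∈ [0,1]. Let (μₙ) be Borel probability measures on ℝ^d × ℝ^d (identified with ℝ^{2d}) converging weakly to the centered multivariate Gaussian measure N(0, V). Then lim_{ν→∞} liminf_{n→∞} ∫ min( ((1−ω)x₁ + ωx₂)ᵀ H ((1−ω)x₁ + ωx₂), ν ) dμₙ(x₁, x₂) = (1−ω)²·tr(HΣ₁) + ω²·tr(HΣ₂) + 2ω(1−ω)·tr(HΩ). -/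

import Mathlib

open MeasureTheory Matrix Filter Real
open scoped ENNReal NNReal BigOperators

/-- The centered multivariate Gaussian measure `N(0, V)` on `ℝ^ι`, defined by its Lebesgue
density `(2π)^{-d/2} det(V)^{-1/2} exp(-xᵀ V⁻¹ x/2)`. -/
noncomputable def centeredGaussian {ι : Type*} [Fintype ι] [DecidableEq ι]
    (V : Matrix ι ι ℝ) : Measure (ι → ℝ) :=
  volume.withDensity fun x =>
    ENNReal.ofReal ((2 * Real.pi) ^ (-(Fintype.card ι : ℝ) / 2) * V.det ^ (-(1 : ℝ) / 2) *
      Real.exp (-(x ⬝ᵥ V⁻¹ *ᵥ x) / 2))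

lemma I0 : ∫ x : ℝ, Real.exp (-x ^ 2 / 2) = Real.sqrt (2 * Real.pi) := by
  have := integral_gaussian (1/2 : ℝ)
  simp only [neg_mul] at this
  rw [show (fun x : ℝ => Real.exp (-x ^ 2 / 2)) = fun x : ℝ => Real.exp (-((1/2) * x ^ 2)) by
    ext x; ring_nf]
  rw [this]; congr 1; ring

lemma intgb : Integrable (fun x : ℝ => Real.exp (-x ^ 2 / 2)) := by
  have := integrable_exp_neg_mul_sq (b := (1/2 : ℝ)) (by norm_num)
  convert this using 2 with x
  ring_nf

lemma intgb1 : Integrable (fun x : ℝ => x * Real.exp (-x ^ 2 / 2)) := by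
  have := integrable_mul_exp_neg_mul_sq (b := (1/2 : ℝ)) (by norm_num)
  convert this using 2 with x
  ring_nf

lemma I1 : ∫ x : ℝ, x * Real.exp (-x ^ 2 / 2) = 0 := by
  have h : ∫ x : ℝ, (-x) * Real.exp (-(-x) ^ 2 / 2) = ∫ x : ℝ, x * Real.exp (-x ^ 2 / 2) :=
    integral_neg_eq_self (fun x : ℝ => x * Real.exp (-x ^ 2 / 2)) _
  simp only [neg_sq, neg_mul] at h
  rw [integral_neg] at h
  linarith

lemma intgb2 : Integrable (fun x : ℝ => x ^ 2 * Real.exp (-x ^ 2 / 2)) := by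
  have hg : Integrable (fun x : ℝ => 4 * Real.exp (-(1/4) * x ^ 2)) :=
    (integrable_exp_neg_mul_sq (by norm_num)).const_mul 4
  refine hg.mono' ?_ ?_
  · exact ((continuous_pow 2).mul (Real.continuous_exp.comp (by continuity))).aestronglyMeasurable
  · filter_upwards with x
    have h1 : x ^ 2 / 4 ≤ Real.exp (x ^ 2 / 4) := by
      nlinarith [Real.add_one_le_exp (x ^ 2 / 4)]
    have h2 : (0:ℝ) < Real.exp (-x ^ 2 / 2) := Real.exp_pos _
    rw [Real.norm_eq_abs, abs_of_nonneg (by positivity)]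
    calc x ^ 2 * Real.exp (-x ^ 2 / 2) ≤ (4 * Real.exp (x ^ 2 / 4)) * Real.exp (-x ^ 2 / 2) := by
          nlinarith
      _ = 4 * Real.exp (-(1/4) * x ^ 2) := by
          rw [mul_assoc, ← Real.exp_add]; ring_nf

lemma I2 : ∫ x : ℝ, x ^ 2 * Real.exp (-x ^ 2 / 2) = Real.sqrt (2 * Real.pi) := by
  have hderiv : ∀ x : ℝ, HasDerivAt (fun y : ℝ => -y * Real.exp (-y ^ 2 / 2))
      (x ^ 2 * Real.exp (-x ^ 2 / 2) - Real.exp (-x ^ 2 / 2)) x := by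
    intro x
    have hv : HasDerivAt (fun y : ℝ => Real.exp (-y ^ 2 / 2))
        (Real.exp (-x ^ 2 / 2) * (-(2 * x ^ 1) / 2)) x :=
      (((hasDerivAt_pow 2 x).neg).div_const 2).exp
    have hu : HasDerivAt (fun y : ℝ => -y) (-1 : ℝ) x := (hasDerivAt_id x).neg
    have := hu.mul hv
    exact HasDerivAt.congr_deriv this (by ring)
  have hzero := integral_eq_zero_of_hasDerivAt_of_integrable hderiv
    (by exact intgb2.sub intgb) (by simp only [neg_mul]; exact intgb1.neg)
  rw [integral_sub intgb2 intgb, I0] at hzero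
  linarith

open scoped BigOperators

noncomputable def FF {ι : Type*} [DecidableEq ι] (p q k : ι) : ℝ → ℝ := fun t =>
  (if k = p then t else 1) * (if k = q then t else 1) * Real.exp (-t ^ 2 / 2)

lemma FF_integrable {ι : Type*} [DecidableEq ι] (p q k : ι) : Integrable (FF p q k) := by
  unfold FF
  by_cases hp : k = p <;> by_cases hq : k = q
  · subst hp; subst hq
    simp only [if_pos rfl]
    exact intgb2.congr (Filter.Eventually.of_forall fun t => by simp [pow_two])
  · subst hp; simp only [if_pos rfl, if_neg hq, mul_one]; exact intgb1
  · subst hq; simp only [if_pos rfl, if_neg hp, one_mul]; exact intgb1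
  · simp only [if_neg hp, if_neg hq, one_mul]; exact intgb

lemma FF_prod {ι : Type*} [Fintype ι] [DecidableEq ι] (p q : ι) (y : ι → ℝ) :
    ∏ k, FF p q k (y k) = (y p * y q) * ∏ k, Real.exp (-(y k) ^ 2 / 2) := by
  unfold FF
  rw [Finset.prod_mul_distrib, Finset.prod_mul_distrib]
  congr 1
  congr 1
  · simpa using Finset.prod_ite_eq' Finset.univ p (fun k => y k)
  · simpa using Finset.prod_ite_eq' Finset.univ q (fun k => y k)

lemma integrable_T {ι : Type*} [Fintype ι] [DecidableEq ι] (p q : ι) :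
    Integrable (fun y : ι → ℝ => (y p * y q) * ∏ k, Real.exp (-(y k) ^ 2 / 2)) volume := by
  have := MeasureTheory.Integrable.fintype_prod (𝕜 := ℝ) (E := ℝ) (f := FF p q)
    (fun k => FF_integrable p q k)
  exact this.congr (Filter.Eventually.of_forall fun y => FF_prod p q y)

lemma integral_T {ι : Type*} [Fintype ι] [DecidableEq ι] (p q : ι) :
    ∫ y : ι → ℝ, (y p * y q) * ∏ k, Real.exp (-(y k) ^ 2 / 2) =
      if p = q then Real.sqrt (2 * Real.pi) ^ (Fintype.card ι) else 0 := by
  rw [← integral_congr_ae (Filter.Eventually.of_forall fun y => FF_prod p q y)]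
  rw [MeasureTheory.integral_fintype_prod_volume_eq_prod (FF p q)]
  by_cases hpq : p = q
  · subst hpq
    rw [if_pos rfl]
    have hval : ∀ k : ι, ∫ t : ℝ, FF p p k t = Real.sqrt (2 * Real.pi) := by
      intro k
      unfold FF
      by_cases hk : k = p
      · subst hk
        simp only [if_pos rfl]
        rw [← I2]
        exact integral_congr_ae (Filter.Eventually.of_forall fun t => by simp [pow_two])
      · simp only [if_neg hk, one_mul]
        exact I0
    rw [Finset.prod_congr rfl (fun k _ => hval k), Finset.prod_const, Finset.card_univ]
  · rw [if_neg hpq]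
    refine Finset.prod_eq_zero (Finset.mem_univ p) ?_
    unfold FF
    simp only [if_pos rfl, if_neg (fun h => hpq h : ¬ p = q), mul_one]
    exact I1

section Gauss
variable {ι : Type*} [Fintype ι] [DecidableEq ι]

/-- density -/
noncomputable def gd (V : Matrix ι ι ℝ) : (ι → ℝ) → ℝ := fun x =>
  (2 * Real.pi) ^ (-(Fintype.card ι : ℝ) / 2) * V.det ^ (-(1 : ℝ) / 2) *
    Real.exp (-(x ⬝ᵥ V⁻¹ *ᵥ x) / 2)

lemma continuous_quadForm (M : Matrix ι ι ℝ) : Continuous fun x : ι → ℝ => x ⬝ᵥ M *ᵥ x := by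
  simp only [dotProduct, Matrix.mulVec]
  exact continuous_finset_sum _ fun i _ =>
    (continuous_apply i).mul (continuous_finset_sum _ fun j _ =>
      continuous_const.mul (continuous_apply j))

lemma gd_continuous (V : Matrix ι ι ℝ) : Continuous (gd V) :=
  continuous_const.mul (Real.continuous_exp.comp ((continuous_quadForm V⁻¹).neg.div_const 2))

lemma gd_nonneg (V : Matrix ι ι ℝ) (hdet : 0 ≤ V.det) (x : ι → ℝ) : 0 ≤ gd V x :=
  mul_nonneg (mul_nonneg (Real.rpow_nonneg (by positivity) _) (Real.rpow_nonneg hdet _))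
    (Real.exp_pos _).le

lemma centeredGaussian_eq (V : Matrix ι ι ℝ) :
    centeredGaussian V = volume.withDensity fun x => (Real.toNNReal (gd V x) : ℝ≥0∞) :=
  rfl

lemma gd_meas (V : Matrix ι ι ℝ) : Measurable fun x => Real.toNNReal (gd V x) :=
  ((gd_continuous V).measurable).real_toNNReal

lemma integral_centeredGaussian (V : Matrix ι ι ℝ) (hdet : 0 ≤ V.det) (f : (ι → ℝ) → ℝ) :
    ∫ x, f x ∂(centeredGaussian V) = ∫ x, f x * gd V x := by
  rw [centeredGaussian_eq, integral_withDensity_eq_integral_smul (gd_meas V) f]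
  congr 1; ext x
  simp [NNReal.smul_def, Real.coe_toNNReal _ (gd_nonneg V hdet x), mul_comm]

lemma integrable_centeredGaussian_iff (V : Matrix ι ι ℝ) (hdet : 0 ≤ V.det) (f : (ι → ℝ) → ℝ) :
    Integrable f (centeredGaussian V) ↔ Integrable (fun x => f x * gd V x) volume := by
  rw [centeredGaussian_eq, integrable_withDensity_iff_integrable_smul (gd_meas V)]
  exact integrable_congr (Filter.Eventually.of_forall fun x => by
    simp [NNReal.smul_def, Real.coe_toNNReal _ (gd_nonneg V hdet x), mul_comm])

lemma comp_mulVec_integral (M : Matrix ι ι ℝ) (hM : M.det ≠ 0) (g : (ι → ℝ) → ℝ)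
    (hg : Continuous g) :
    ∫ x, g x = |M.det| * ∫ y, g (M *ᵥ y) := by
  have hmap := Real.map_matrix_volume_pi_eq_smul_volume_pi hM
  have hφ : Measurable (Matrix.toLin' M) :=
    (Matrix.toLin' M).continuous_of_finiteDimensional.measurable
  have hg' : AEStronglyMeasurable g (Measure.map (Matrix.toLin' M) volume) := by
    rw [hmap]; exact hg.aestronglyMeasurable.mono_ac Measure.smul_absolutelyContinuous
  have h1 : ∫ y, g (M *ᵥ y) = ∫ x, g x ∂(Measure.map (Matrix.toLin' M) volume) := by
    rw [integral_map hφ.aemeasurable hg']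
    simp [Matrix.toLin'_apply]
  rw [h1, hmap, integral_smul_measure, ENNReal.toReal_ofReal (abs_nonneg _), smul_eq_mul,
    ← mul_assoc, abs_inv, mul_inv_cancel₀ (abs_ne_zero.2 hM), one_mul]

lemma comp_mulVec_integrable_iff (M : Matrix ι ι ℝ) (hM : M.det ≠ 0) (g : (ι → ℝ) → ℝ)
    (hg : Continuous g) :
    Integrable (fun y => g (M *ᵥ y)) volume ↔ Integrable g volume := by
  have hmap := Real.map_matrix_volume_pi_eq_smul_volume_pi hM
  have hφ : Measurable (Matrix.toLin' M) :=
    (Matrix.toLin' M).continuous_of_finiteDimensional.measurable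
  have hg' : AEStronglyMeasurable g (Measure.map (Matrix.toLin' M) volume) := by
    rw [hmap]; exact hg.aestronglyMeasurable.mono_ac Measure.smul_absolutelyContinuous
  have h2 : (fun y => g (M *ᵥ y)) = g ∘ (Matrix.toLin' M) := by
    ext y; simp [Matrix.toLin'_apply]
  rw [h2, ← integrable_map_measure hg' hφ.aemeasurable, hmap,
    integrable_smul_measure (by simp [hM]) (by simp)]

end Gauss

open scoped MatrixOrder in
lemma centeredGaussian_moment {ι : Type*} [Fintype ι] [DecidableEq ι]
    (V : Matrix ι ι ℝ) (hV : V.PosDef) (a b : ι) :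
    Integrable (fun x : ι → ℝ => x a * x b) (centeredGaussian V) ∧
    ∫ x : ι → ℝ, x a * x b ∂(centeredGaussian V) = V a b := by
  have hdetV : 0 < V.det := hV.det_pos
  set A := CFC.sqrt V with hAdef
  have hAA : A * A = V := CFC.sqrt_mul_sqrt_self V hV.posSemidef.nonneg
  have hAt : Aᵀ = A := by
    have h := (Matrix.nonneg_iff_posSemidef.1 (CFC.sqrt_nonneg V)).isHermitian.eq
    rwa [Matrix.conjTranspose_eq_transpose_of_trivial] at h
  have hdetA2 : A.det * A.det = V.det := by rw [← Matrix.det_mul, hAA]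
  have hdetA : A.det ≠ 0 := by
    intro h; rw [h, zero_mul] at hdetA2; exact hdetV.ne' hdetA2.symm
  have habs : |A.det| = Real.sqrt V.det := by rw [← hdetA2, Real.sqrt_mul_self_eq_abs]
  have hu : IsUnit A.det := isUnit_iff_ne_zero.2 hdetA
  have hAVA : A * V⁻¹ * A = 1 := by
    rw [← hAA, Matrix.mul_inv_rev, ← Matrix.mul_assoc,
      Matrix.mul_nonsing_inv _ hu, Matrix.one_mul, Matrix.nonsing_inv_mul _ hu]
  have hquad : ∀ y : ι → ℝ, (A *ᵥ y) ⬝ᵥ V⁻¹ *ᵥ (A *ᵥ y) = y ⬝ᵥ y := by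
    intro y
    calc (A *ᵥ y) ⬝ᵥ V⁻¹ *ᵥ (A *ᵥ y)
        = (A *ᵥ y) ⬝ᵥ (V⁻¹ * A) *ᵥ y := by rw [Matrix.mulVec_mulVec]
      _ = ((A *ᵥ y) ᵥ* (V⁻¹ * A)) ⬝ᵥ y := Matrix.dotProduct_mulVec _ _ _
      _ = ((y ᵥ* Aᵀ) ᵥ* (V⁻¹ * A)) ⬝ᵥ y := by rw [Matrix.vecMul_transpose]
      _ = (y ᵥ* (Aᵀ * (V⁻¹ * A))) ⬝ᵥ y := by rw [Matrix.vecMul_vecMul]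
      _ = (y ᵥ* 1) ⬝ᵥ y := by rw [← Matrix.mul_assoc, hAt, hAVA]
      _ = y ⬝ᵥ y := by rw [Matrix.vecMul_one]
  set c : ℝ := (2 * Real.pi) ^ (-(Fintype.card ι : ℝ) / 2) * V.det ^ (-(1 : ℝ) / 2) with hc
  have hgd : ∀ y : ι → ℝ, gd V (A *ᵥ y) = c * ∏ k, Real.exp (-(y k) ^ 2 / 2) := by
    intro y
    unfold gd
    rw [hquad y, hc]
    congr 1
    have h2 : -(y ⬝ᵥ y) / 2 = ∑ k, -(y k) ^ 2 / 2 := by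
      simp only [dotProduct, ← pow_two, neg_div, Finset.sum_div, Finset.sum_neg_distrib]
    rw [h2, Real.exp_sum]
  have hma : ∀ (i : ι) (y : ι → ℝ), (A *ᵥ y) i = ∑ p, A i p * y p := fun i y => rfl
  have hfun : (fun y : ι → ℝ => ((A *ᵥ y) a * (A *ᵥ y) b) * gd V (A *ᵥ y)) =
      fun y => ∑ p, ∑ q, (c * (A a p * A b q)) *
        ((y p * y q) * ∏ k, Real.exp (-(y k) ^ 2 / 2)) := by
    ext y
    rw [hgd y, hma a y, hma b y, Finset.sum_mul_sum]
    rw [Finset.sum_mul]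
    refine Finset.sum_congr rfl fun p _ => ?_
    rw [Finset.sum_mul]
    refine Finset.sum_congr rfl fun q _ => ?_
    ring
  have hterm : ∀ p q : ι, Integrable (fun y : ι → ℝ => (c * (A a p * A b q)) *
      ((y p * y q) * ∏ k, Real.exp (-(y k) ^ 2 / 2))) volume :=
    fun p q => (integrable_T p q).const_mul _
  have hsumint : Integrable (fun y : ι → ℝ => ∑ p, ∑ q, (c * (A a p * A b q)) *
      ((y p * y q) * ∏ k, Real.exp (-(y k) ^ 2 / 2))) volume :=
    integrable_finset_sum _ fun p _ => integrable_finset_sum _ fun q _ => hterm p q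
  have hgcont : Continuous (fun x : ι → ℝ => (x a * x b) * gd V x) :=
    ((continuous_apply a).mul (continuous_apply b)).mul (gd_continuous V)
  have hmain : (fun x : ι → ℝ => (x a * x b) * gd V x) ∘ (fun y => A *ᵥ y) =
      fun y => ∑ p, ∑ q, (c * (A a p * A b q)) *
        ((y p * y q) * ∏ k, Real.exp (-(y k) ^ 2 / 2)) := hfun
  constructor
  · rw [integrable_centeredGaussian_iff V hdetV.le]
    rw [← comp_mulVec_integrable_iff A hdetA _ hgcont]
    exact hsumint.congr (Filter.Eventually.of_forall fun y => (congrFun hfun y).symm)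
  · rw [integral_centeredGaussian V hdetV.le, comp_mulVec_integral A hdetA _ hgcont]
    rw [integral_congr_ae (Filter.Eventually.of_forall fun y => congrFun hfun y)]
    rw [integral_finset_sum _ fun p _ => integrable_finset_sum _ fun q _ => hterm p q]
    rw [Finset.sum_congr rfl fun p _ => integral_finset_sum _ fun q _ => hterm p q]
    rw [Finset.sum_congr rfl fun p _ => Finset.sum_congr rfl fun q _ =>
      integral_const_mul _ _]
    rw [Finset.sum_congr rfl fun p _ => Finset.sum_congr rfl fun q _ => by rw [integral_T p q]]
    have hstep : ∀ p : ι, ∑ q, (c * (A a p * A b q)) *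
        (if p = q then Real.sqrt (2 * Real.pi) ^ (Fintype.card ι) else 0) =
        (c * (A a p * A b p)) * Real.sqrt (2 * Real.pi) ^ (Fintype.card ι) := by
      intro p
      rw [Finset.sum_congr rfl fun q _ => (mul_ite _ _ _ _).trans (by rw [mul_zero])]
      exact Finset.sum_ite_eq Finset.univ p
        (fun q => (c * (A a p * A b q)) * Real.sqrt (2 * Real.pi) ^ (Fintype.card ι)) |>.trans
        (if_pos (Finset.mem_univ p))
    rw [Finset.sum_congr rfl fun p _ => hstep p]
    have hAAab : ∑ p, A a p * A b p = V a b := by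
      have : ∀ p, A b p = A p b := fun p => by
        conv_lhs => rw [← hAt, Matrix.transpose_apply]
      rw [Finset.sum_congr rfl fun p _ => by rw [this p], ← Matrix.mul_apply, hAA]
    have hconst : |A.det| * c * Real.sqrt (2 * Real.pi) ^ (Fintype.card ι) = 1 := by
      rw [habs, Real.sqrt_eq_rpow, Real.sqrt_eq_rpow, hc]
      rw [← Real.rpow_natCast ((2 * Real.pi) ^ (1 / (2:ℝ))) (Fintype.card ι),
        ← Real.rpow_mul (by positivity)]
      have e1 : V.det ^ ((1:ℝ)/2) * V.det ^ (-(1:ℝ)/2) = 1 := by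
        rw [← Real.rpow_add hdetV]; norm_num
      have e2 : (2 * Real.pi) ^ (-(Fintype.card ι : ℝ)/2) *
          (2 * Real.pi) ^ ((1/(2:ℝ)) * (Fintype.card ι : ℝ)) = 1 := by
        rw [← Real.rpow_add (by positivity),
          show -(Fintype.card ι : ℝ)/2 + (1/(2:ℝ)) * (Fintype.card ι : ℝ) = 0 by ring,
          Real.rpow_zero]
      calc V.det ^ ((1:ℝ)/2) * ((2 * Real.pi) ^ (-(Fintype.card ι : ℝ) / 2) *
            V.det ^ (-(1:ℝ)/2)) * (2 * Real.pi) ^ ((1/(2:ℝ)) * (Fintype.card ι : ℝ))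
          = (V.det ^ ((1:ℝ)/2) * V.det ^ (-(1:ℝ)/2)) *
            ((2 * Real.pi) ^ (-(Fintype.card ι : ℝ)/2) *
              (2 * Real.pi) ^ ((1/(2:ℝ)) * (Fintype.card ι : ℝ))) := by ring
        _ = 1 := by rw [e1, e2, one_mul]
    calc |A.det| * ∑ p, (c * (A a p * A b p)) * Real.sqrt (2 * Real.pi) ^ (Fintype.card ι)
        = (|A.det| * c * Real.sqrt (2 * Real.pi) ^ (Fintype.card ι)) * ∑ p, A a p * A b p := by
          rw [Finset.mul_sum, Finset.mul_sum]
          exact Finset.sum_congr rfl fun p _ => by ring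
      _ = V a b := by rw [hconst, hAAab, one_mul]

/-- Pooled trimmed asymptotic risk under joint weak convergence to a centered Gaussian:
if probability measures `μₙ` on `ℝ^d × ℝ^d ≅ ℝ^{2d}` converge weakly to `N(0, V)` with
`V = [[Σ₁, Ω], [Ωᵀ, Σ₂]]` positive definite, `H` is symmetric positive semidefinite and
`ω ∈ [0,1]`, then
`lim_{ν→∞} liminf_n ∫ min(((1-ω)x₁ + ωx₂)ᵀH((1-ω)x₁ + ωx₂), ν) dμₙ(x₁,x₂)
  = (1-ω)² tr(HΣ₁) + ω² tr(HΣ₂) + 2ω(1-ω) tr(HΩ)`. -/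
theorem pooled_trimmed_risk_tendsto_gaussian
    (d : ℕ) (hd : 1 ≤ d) (S₁ S₂ O : Matrix (Fin d) (Fin d) ℝ)
    (hV : (Matrix.fromBlocks S₁ O Oᵀ S₂).PosDef)
    (H : Matrix (Fin d) (Fin d) ℝ) (hH : H.PosSemidef)
    (ω : ℝ) (hω : ω ∈ Set.Icc (0 : ℝ) 1)
    (μₙ : ℕ → Measure ((Fin d ⊕ Fin d) → ℝ)) [∀ n, IsProbabilityMeasure (μₙ n)]
    (hweak : ∀ f : BoundedContinuousFunction ((Fin d ⊕ Fin d) → ℝ) ℝ,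
      Tendsto (fun n => ∫ x, f x ∂(μₙ n)) atTop
        (nhds (∫ x, f x ∂(centeredGaussian (Matrix.fromBlocks S₁ O Oᵀ S₂))))) :
    Tendsto
      (fun ν : ℝ => liminf
        (fun n => ∫ x,
          min ((((1 - ω) • fun i => x (Sum.inl i)) + ω • fun i => x (Sum.inr i)) ⬝ᵥ
            H *ᵥ (((1 - ω) • fun i => x (Sum.inl i)) + ω • fun i => x (Sum.inr i))) ν
          ∂(μₙ n)) atTop)
      atTop
      (nhds ((1 - ω) ^ 2 * (H * S₁).trace + ω ^ 2 * (H * S₂).trace +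
        2 * ω * (1 - ω) * (H * O).trace)) := by
  set V : Matrix (Fin d ⊕ Fin d) (Fin d ⊕ Fin d) ℝ := Matrix.fromBlocks S₁ O Oᵀ S₂ with hVdef
  set γ : Measure ((Fin d ⊕ Fin d) → ℝ) := centeredGaussian V with hγdef
  set w : Fin d → ((Fin d ⊕ Fin d) → ℝ) → ℝ :=
    fun i x => (1 - ω) * x (Sum.inl i) + ω * x (Sum.inr i) with hwdef
  set Q : ((Fin d ⊕ Fin d) → ℝ) → ℝ :=
    fun x => ∑ i, ∑ j, w i x * (H i j * w j x) with hQdef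
  -- the quadratic form in the statement equals Q
  have hrepr : ∀ x : (Fin d ⊕ Fin d) → ℝ,
      ((((1 - ω) • fun i => x (Sum.inl i)) + ω • fun i => x (Sum.inr i)) ⬝ᵥ
        H *ᵥ (((1 - ω) • fun i => x (Sum.inl i)) + ω • fun i => x (Sum.inr i))) = Q x := by
    intro x
    simp only [hQdef, hwdef, dotProduct, Matrix.mulVec, Pi.add_apply, Pi.smul_apply,
      smul_eq_mul, Finset.mul_sum]
  -- nonnegativity of Q
  have hQ0 : ∀ x, 0 ≤ Q x := by
    intro x
    rw [← hrepr x]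
    simpa using hH.dotProduct_mulVec_nonneg (((1 - ω) • fun i => x (Sum.inl i)) + ω • fun i => x (Sum.inr i))
  -- continuity of Q
  have hwcont : ∀ i, Continuous (w i) := fun i =>
    (continuous_const.mul (continuous_apply _)).add (continuous_const.mul (continuous_apply _))
  have hQcont : Continuous Q := by
    rw [hQdef]
    exact continuous_finset_sum _ fun i _ => continuous_finset_sum _ fun j _ =>
      (hwcont i).mul (continuous_const.mul (hwcont j))
  -- moments
  have mom := fun a b => centeredGaussian_moment V hV a b
  -- pairwise integrability and integrals
  set EW : Fin d → Fin d → ℝ := fun i j =>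
    (1 - ω) ^ 2 * S₁ i j + (1 - ω) * ω * O i j + ω * (1 - ω) * Oᵀ i j + ω ^ 2 * S₂ i j with hEW
  set cf : Fin 2 → ℝ := ![1 - ω, ω] with hcf
  set idx : Fin d → Fin 2 → (Fin d ⊕ Fin d) := fun i => ![Sum.inl i, Sum.inr i] with hidx
  have hpair : ∀ i j : Fin d,
      Integrable (fun x => w i x * (H i j * w j x)) γ ∧
      ∫ x, w i x * (H i j * w j x) ∂γ = H i j * EW i j := by
    intro i j
    have e : (fun x : (Fin d ⊕ Fin d) → ℝ => w i x * (H i j * w j x)) =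
        fun x => H i j * ∑ s : Fin 2, ∑ t : Fin 2,
          (cf s * cf t) * (x (idx i s) * x (idx j t)) := by
      ext x
      rw [hwdef, hcf, hidx]
      simp only [Fin.sum_univ_two, Matrix.cons_val_zero, Matrix.cons_val_one, Matrix.head_cons]
      ring
    have hterm : ∀ (i' j' : Fin d) (s t : Fin 2), Integrable
        (fun x : (Fin d ⊕ Fin d) → ℝ => (cf s * cf t) * (x (idx i' s) * x (idx j' t))) γ :=
      fun i' j' s t => ((mom (idx i' s) (idx j' t)).1.const_mul _)
    have hsint : Integrable (fun x : (Fin d ⊕ Fin d) → ℝ => ∑ s : Fin 2, ∑ t : Fin 2,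
        (cf s * cf t) * (x (idx i s) * x (idx j t))) γ :=
      integrable_finset_sum _ fun s _ => integrable_finset_sum _ fun t _ => hterm i j s t
    constructor
    · rw [e]; exact hsint.const_mul _
    · rw [e, integral_const_mul]
      congr 1
      rw [integral_finset_sum _ fun s _ => integrable_finset_sum _ fun t _ => hterm i j s t]
      rw [Finset.sum_congr rfl fun s _ => integral_finset_sum _ fun t _ => hterm i j s t]
      rw [Finset.sum_congr rfl fun s _ => Finset.sum_congr rfl fun t _ => integral_const_mul _ _]
      rw [Finset.sum_congr rfl fun s _ => Finset.sum_congr rfl fun t _ =>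
        by rw [(mom (idx i s) (idx j t)).2]]
      rw [hcf, hidx, hEW, hVdef]
      simp only [Fin.sum_univ_two, Matrix.cons_val_zero, Matrix.cons_val_one, Matrix.head_cons,
        Matrix.fromBlocks_apply₁₁, Matrix.fromBlocks_apply₁₂, Matrix.fromBlocks_apply₂₁,
        Matrix.fromBlocks_apply₂₂]
      ring
  -- integrability of Q
  have hQint : Integrable Q γ := by
    rw [hQdef]
    exact integrable_finset_sum _ fun i _ => integrable_finset_sum _ fun j _ => (hpair i j).1
  -- value of ∫ Q
  have hQval : ∫ x, Q x ∂γ = (1 - ω) ^ 2 * (H * S₁).trace + ω ^ 2 * (H * S₂).trace +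
      2 * ω * (1 - ω) * (H * O).trace := by
    rw [hQdef]
    rw [integral_finset_sum _ fun i _ => integrable_finset_sum _ fun j _ => (hpair i j).1]
    rw [Finset.sum_congr rfl fun i _ => integral_finset_sum _ fun j _ => (hpair i j).1]
    rw [Finset.sum_congr rfl fun i _ => Finset.sum_congr rfl fun j _ => (hpair i j).2]
    -- trace helper
    have tr_helper : ∀ M : Matrix (Fin d) (Fin d) ℝ,
        ∑ i, ∑ j, H i j * M i j = (H * Mᵀ).trace := by
      intro M
      simp only [Matrix.trace, Matrix.diag, Matrix.mul_apply, Matrix.transpose_apply]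
    -- symmetry of blocks
    have hVsym : (Matrix.fromBlocks S₁ O Oᵀ S₂)ᵀ = Matrix.fromBlocks S₁ O Oᵀ S₂ := by
      have h := hV.posSemidef.isHermitian.eq
      rwa [Matrix.conjTranspose_eq_transpose_of_trivial] at h
    rw [Matrix.fromBlocks_transpose] at hVsym
    have h11 : S₁ᵀ = S₁ := by
      have := congrArg Matrix.toBlocks₁₁ hVsym
      simpa [Matrix.toBlocks_fromBlocks₁₁] using this
    have h22 : S₂ᵀ = S₂ := by
      have := congrArg Matrix.toBlocks₂₂ hVsym
      simpa [Matrix.toBlocks_fromBlocks₂₂] using this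
    have hHt : Hᵀ = H := by
      have h := hH.isHermitian.eq
      rwa [Matrix.conjTranspose_eq_transpose_of_trivial] at h
    have htrO : (H * Oᵀ).trace = (H * O).trace := by
      rw [← Matrix.trace_transpose, Matrix.transpose_mul, Matrix.transpose_transpose, hHt,
        Matrix.trace_mul_comm]
    have expand : ∀ i j, H i j * EW i j =
        (1 - ω) ^ 2 * (H i j * S₁ i j) + (1 - ω) * ω * (H i j * O i j) +
        ω * (1 - ω) * (H i j * Oᵀ i j) + ω ^ 2 * (H i j * S₂ i j) := by
      intro i j; rw [hEW]; ring
    rw [Finset.sum_congr rfl fun i _ => Finset.sum_congr rfl fun j _ => expand i j]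
    simp only [Finset.sum_add_distrib, ← Finset.mul_sum]
    rw [tr_helper S₁, tr_helper O, tr_helper Oᵀ, tr_helper S₂, Matrix.transpose_transpose,
      h11, h22, htrO]
    ring
  -- Step D: liminf equals Gaussian integral of truncation
  have hD : ∀ ν : ℝ,
      liminf (fun n => ∫ x, min (Q x) ν ∂(μₙ n)) atTop = ∫ x, min (Q x) ν ∂γ := by
    intro ν
    have hbd : ∀ x, ‖min (Q x) ν‖ ≤ |ν| := by
      intro x
      rw [Real.norm_eq_abs, abs_le]
      exact ⟨le_min ((neg_nonpos_of_nonneg (abs_nonneg ν)).trans (hQ0 x)) (neg_abs_le ν),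
        (min_le_right _ _).trans (le_abs_self ν)⟩
    set f : BoundedContinuousFunction ((Fin d ⊕ Fin d) → ℝ) ℝ :=
      BoundedContinuousFunction.ofNormedAddCommGroup
        (fun x => min (Q x) ν) (hQcont.min continuous_const) |ν| hbd with hf
    have ht := hweak f
    simp only [hf, BoundedContinuousFunction.coe_ofNormedAddCommGroup] at ht
    exact ht.liminf_eq
  -- Step C: monotone truncation limit
  have hC : Tendsto (fun ν : ℝ => ∫ x, min (Q x) ν ∂γ) atTop (nhds (∫ x, Q x ∂γ)) := by
    refine tendsto_integral_filter_of_dominated_convergence Q ?_ ?_ hQint ?_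
    · exact Filter.Eventually.of_forall fun ν => (hQcont.min continuous_const).aestronglyMeasurable
    · filter_upwards [Filter.eventually_ge_atTop (0:ℝ)] with ν hν
      refine Filter.Eventually.of_forall fun x => ?_
      rw [Real.norm_eq_abs, abs_of_nonneg (le_min (hQ0 x) hν)]
      exact min_le_left _ _
    · refine Filter.Eventually.of_forall fun x => ?_
      refine Tendsto.congr' ?_ tendsto_const_nhds
      filter_upwards [Filter.eventually_ge_atTop (Q x)] with ν hν
      exact (min_eq_left hν).symm
  -- conclude
  have hfun : (fun ν : ℝ => liminf
      (fun n => ∫ x,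
        min ((((1 - ω) • fun i => x (Sum.inl i)) + ω • fun i => x (Sum.inr i)) ⬝ᵥ
          H *ᵥ (((1 - ω) • fun i => x (Sum.inl i)) + ω • fun i => x (Sum.inr i))) ν
        ∂(μₙ n)) atTop) = fun ν : ℝ => ∫ x, min (Q x) ν ∂γ := by
    funext ν
    rw [← hD ν]
    congr 1
    funext n
    exact integral_congr_ae (Filter.Eventually.of_forall fun x =>
      congrArg (fun r => min r ν) (hrepr x))
  rw [hfun, ← hQval]
  exact hC
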